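/- Let 𝔤 be a finite-dimensional real Lie algebra with a symmetric, nondegenerate, invariant bilinear form B𝔤 and B𝔤-dual bases e, f : ι → 𝔤, let ρ : 𝔤 → Module.End ℝ V be a Lie algebra homomorphism into the endomorphisms of a finite-dimensional real vector space V, and let B be a nondegenerate symmetric bilinear form on V. Define R X Y := ∑ᵢ (B (ρ(e i) X) Y) • ρ(f i). If R X Y = − R Y X for all X, Y ∈ V (skew-symmetry of the lowered weight tensor in its first two arguments), then R X Y is B-skew-adjoint: B (R X Y Z) W = − B Z (R X Y W) for all X, Y, Z, W ∈ V. Consequently, if in addition the first Bianchi identity R X Y Z + R Y Z X + R Z X Y = 0 holds, then R is a curvature operator on (V, B). (Theorem 8: a Lie algebra weight tensor with curvature symmetries yields an algebraic curvature tensor, and hence is realizable on a symmetric space.) -/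

import Mathlib

open scoped Classical

attribute [local instance 100] LieRing.ofAssociativeRing

/-- Theorem 8 (one direction): if the lowered Lie algebra weight tensor is skew-symmetric
in its first two arguments, then each R X Y is B-skew-adjoint; hence if moreover the first
Bianchi identity holds, R is a curvature operator on (V, B). -/
theorem lowered_weight_tensor_curvature_operator
    {𝔤 : Type*} [LieRing 𝔤] [LieAlgebra ℝ 𝔤] [FiniteDimensional ℝ 𝔤]
    {V : Type*} [AddCommGroup V] [Module ℝ V] [FiniteDimensional ℝ V]
    (B𝔤 : 𝔤 →ₗ[ℝ] 𝔤 →ₗ[ℝ] ℝ)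
    (hB𝔤symm : ∀ x y, B𝔤 x y = B𝔤 y x)
    (hB𝔤nd : ∀ x, (∀ y, B𝔤 x y = 0) → x = 0)
    (hB𝔤inv : ∀ x y z : 𝔤, B𝔤 ⁅z, x⁆ y + B𝔤 x ⁅z, y⁆ = 0)
    {ι : Type*} [Fintype ι]
    (e f : Module.Basis ι ℝ 𝔤)
    (hdual : ∀ i j, B𝔤 (e i) (f j) = if i = j then 1 else 0)
    (ρ : 𝔤 →ₗ⁅ℝ⁆ Module.End ℝ V)
    (B : V →ₗ[ℝ] V →ₗ[ℝ] ℝ)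
    (hBsymm : ∀ X Y, B X Y = B Y X)
    (hBnd : ∀ X, (∀ Y, B X Y = 0) → X = 0)
    (R : V → V → Module.End ℝ V)
    (hR : ∀ X Y, R X Y = ∑ i, (B (ρ (e i) X) Y) • ρ (f i))
    (hRskew : ∀ X Y, R X Y = - R Y X) :
    (∀ X Y Z W : V, B (R X Y Z) W = - B Z (R X Y W)) ∧
    ((∀ X Y Z : V, R X Y Z + R Y Z X + R Z X Y = 0) →
      ((∀ (a : ℝ) (X X' Y : V), R (a • X + X') Y = a • R X Y + R X' Y) ∧
       (∀ (a : ℝ) (X Y Y' : V), R X (a • Y + Y') = a • R X Y + R X Y') ∧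
       (∀ X Y : V, R X Y = - R Y X) ∧
       (∀ X Y Z W : V, B (R X Y Z) W = - B Z (R X Y W)) ∧
       (∀ X Y Z : V, R X Y Z + R Y Z X + R Z X Y = 0))) := by
  -- expansion of any vector in the basis f with coefficients from e
  have expand : ∀ x : 𝔤, x = ∑ i, B𝔤 (e i) x • f i := by
    intro x
    conv_lhs => rw [← f.sum_repr x]
    refine Finset.sum_congr rfl fun j _ => ?_
    congr 1
    have h1 : B𝔤 (e j) x = B𝔤 (e j) (∑ i, f.repr x i • f i) := by rw [f.sum_repr]
    rw [h1, map_sum]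
    simp only [map_smul, hdual, smul_eq_mul, mul_ite, mul_one, mul_zero]
    simp [Finset.sum_ite_eq]
  -- swap lemma for dual bases
  have swap : ∀ g h : 𝔤 →ₗ[ℝ] ℝ,
      ∑ i, g (e i) * h (f i) = ∑ i, g (f i) * h (e i) := by
    intro g h
    have hg : ∀ i, g (e i) = ∑ j, B𝔤 (e j) (e i) * g (f j) := by
      intro i
      conv_lhs => rw [expand (e i)]
      rw [map_sum]
      simp [mul_comm]
    have hh : ∀ j, h (e j) = ∑ i, B𝔤 (e i) (e j) * h (f i) := by
      intro j
      conv_lhs => rw [expand (e j)]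
      rw [map_sum]
      simp [mul_comm]
    calc ∑ i, g (e i) * h (f i)
        = ∑ i, ∑ j, B𝔤 (e j) (e i) * g (f j) * h (f i) := by
          refine Finset.sum_congr rfl fun i _ => ?_
          rw [hg i, Finset.sum_mul]
      _ = ∑ j, ∑ i, B𝔤 (e j) (e i) * g (f j) * h (f i) := Finset.sum_comm
      _ = ∑ j, g (f j) * h (e j) := by
          refine Finset.sum_congr rfl fun j _ => ?_
          rw [hh j, Finset.mul_sum]
          refine Finset.sum_congr rfl fun i _ => ?_
          rw [hB𝔤symm (e i) (e j)]
          ring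
  -- the lowered tensor formula
  have Tform : ∀ X Y Z W : V,
      B (R X Y Z) W = ∑ i, B (ρ (e i) X) Y * B (ρ (f i) Z) W := by
    intro X Y Z W
    rw [hR]
    simp only [LinearMap.sum_apply, LinearMap.smul_apply, map_sum, map_smul,
      smul_eq_mul]
  -- pair exchange symmetry
  have pairswap : ∀ X Y Z W : V, B (R X Y Z) W = B (R Z W X) Y := by
    intro X Y Z W
    let g : 𝔤 →ₗ[ℝ] ℝ :=
      { toFun := fun ξ => B (ρ ξ X) Y
        map_add' := by intros; simp
        map_smul' := by intros; simp }
    let h : 𝔤 →ₗ[ℝ] ℝ :=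
      { toFun := fun ξ => B (ρ ξ Z) W
        map_add' := by intros; simp
        map_smul' := by intros; simp }
    have := swap g h
    simp only [g, h, LinearMap.coe_mk, AddHom.coe_mk] at this
    rw [Tform X Y Z W, Tform Z W X Y, this]
    exact Finset.sum_congr rfl fun i _ => mul_comm _ _
  -- skew-adjointness
  have skewadj : ∀ X Y Z W : V, B (R X Y Z) W = - B Z (R X Y W) := by
    intro X Y Z W
    calc B (R X Y Z) W = B (R Z W X) Y := pairswap X Y Z W
      _ = - B (R W Z X) Y := by
          rw [hRskew Z W]
          simp
      _ = - B (R X Y W) Z := by rw [pairswap W Z X Y]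
      _ = - B Z (R X Y W) := by rw [hBsymm]
  refine ⟨skewadj, fun hBianchi => ⟨?_, ?_, hRskew, skewadj, hBianchi⟩⟩
  · intro a X X' Y
    rw [hR, hR, hR, Finset.smul_sum, ← Finset.sum_add_distrib]
    refine Finset.sum_congr rfl fun i _ => ?_
    simp [map_add, map_smul, add_smul, smul_smul]
  · intro a X Y Y'
    rw [hR, hR, hR, Finset.smul_sum, ← Finset.sum_add_distrib]
    refine Finset.sum_congr rfl fun i _ => ?_
    simp [map_add, map_smul, add_smul, smul_smul]
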